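/- Partial sums of discretized composite Haar functions grow at most geometrically in the index: there exists a finite constant C > 0 such that for every sample size T ≥ 1 and every k ≥ 1, |∑_{t=1}^{T} Ψ_k(t)| ≤ C · 2^k, where Ψ_k(t) = ψ_k((t-1)/T). Hence the discrete-basis summand bound of Assumption 1.d holds for the composite Haar basis with η(k) = 2^k. -/

import Mathlib

set_option maxHeartbeats 1000000


/-- The Haar mother wavelet: `ψ(x) = 1` on `[0,1/2)`, `-1` on `[1/2,1)`, and `0` otherwise. -/
noncomputable def haarMother (x : ℝ) : ℝ :=
  if 0 ≤ x ∧ x < 1/2 then 1 else if 1/2 ≤ x ∧ x < 1 then -1 else 0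

/-- The composite Haar functions: `ψ_0(x) = 1` on `[0,1)`, and
`ψ_{k+1}(x) = ∑_{m=0}^{2^k - 1} ψ(2^k x - m)`. -/
noncomputable def haarComposite : ℕ → ℝ → ℝ
  | 0, _ => 1
  | k + 1, x => ∑ m ∈ Finset.range (2 ^ k), haarMother (2 ^ k * x - m)

lemma haar_inner_bound (T j m : ℕ) (hT : 1 ≤ T) (hm : m < 2 ^ j) :
    |∑ n ∈ Finset.range T, haarMother (2 ^ j * (n : ℝ) / T - m)| ≤ 1 := by
  have hT0 : (0:ℝ) < T := by exact_mod_cast hT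
  have h2 : (0:ℝ) < 2 ^ j := by positivity
  have h2' : (0:ℝ) < 2 ^ (j+1) := by positivity
  set α : ℝ := m * T / 2 ^ j with hα
  set β : ℝ := (2 * m + 1) * T / 2 ^ (j + 1) with hβ
  set γ : ℝ := (m + 1) * T / 2 ^ j with hγ
  have hα0 : 0 ≤ α := by positivity
  have hβ0 : 0 ≤ β := by positivity
  have hγ0 : 0 ≤ γ := by positivity
  have hαβ : α ≤ β := by
    rw [hα, hβ, div_le_div_iff₀ h2 h2']
    rw [pow_succ]
    nlinarith [hT0.le, h2.le]
  have hβγ : β ≤ γ := by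
    rw [hβ, hγ, div_le_div_iff₀ h2' h2]
    rw [pow_succ]
    nlinarith [hT0.le, h2.le]
  have hsum : α + γ = 2 * β := by
    rw [hα, hβ, hγ, pow_succ]
    field_simp
    ring
  set a := ⌈α⌉₊ with ha
  set b := ⌈β⌉₊ with hb
  set c := ⌈γ⌉₊ with hc
  have hab : a ≤ b := Nat.ceil_le_ceil hαβ
  have hbc : b ≤ c := Nat.ceil_le_ceil hβγ
  have hβT : β ≤ T := by
    rw [hβ, div_le_iff₀ h2', pow_succ]
    have : (2 * (m:ℝ) + 1) ≤ 2 ^ j * 2 := by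
      have : (m:ℝ) + 1 ≤ 2 ^ j := by exact_mod_cast hm
      linarith
    nlinarith [hT0.le]
  have hγT : γ ≤ T := by
    rw [hγ, div_le_iff₀ h2]
    have : ((m:ℝ) + 1) ≤ 2 ^ j := by exact_mod_cast hm
    nlinarith [hT0.le]
  have hbT : b ≤ T := Nat.ceil_le.mpr hβT
  have hcT : c ≤ T := Nat.ceil_le.mpr hγT
  -- rewrite each term as indicator difference
  have key : ∀ n ∈ Finset.range T, haarMother (2 ^ j * (n : ℝ) / T - m)
      = (if a ≤ n ∧ n < b then (1:ℝ) else 0) - (if b ≤ n ∧ n < c then (1:ℝ) else 0) := by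
    intro n _
    have hy1 : (0 ≤ 2 ^ j * (n : ℝ) / T - m) ↔ (a ≤ n) := by
      rw [ha, Nat.ceil_le, hα, sub_nonneg, le_div_iff₀ hT0, div_le_iff₀ h2]
      constructor <;> intro h <;> nlinarith
    have hy2 : (2 ^ j * (n : ℝ) / T - m < 1/2) ↔ (n < b) := by
      rw [hb, Nat.lt_ceil, hβ, sub_lt_iff_lt_add, div_lt_iff₀ hT0, lt_div_iff₀ h2', pow_succ]
      constructor <;> intro h <;> nlinarith
    have hy3 : (1/2 ≤ 2 ^ j * (n : ℝ) / T - m) ↔ (b ≤ n) := by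
      rw [hb, Nat.ceil_le, hβ, le_sub_iff_add_le, div_le_iff₀ h2', le_div_iff₀ hT0, pow_succ]
      constructor <;> intro h <;> nlinarith
    have hy4 : (2 ^ j * (n : ℝ) / T - m < 1) ↔ (n < c) := by
      rw [hc, Nat.lt_ceil, hγ, sub_lt_iff_lt_add, div_lt_iff₀ hT0, lt_div_iff₀ h2]
      constructor <;> intro h <;> nlinarith
    rw [haarMother]
    by_cases h1 : a ≤ n ∧ n < b
    · rw [if_pos, if_pos h1]
      · have : ¬ (b ≤ n ∧ n < c) := fun h => absurd h1.2 (not_lt.mpr h.1)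
        rw [if_neg this]; ring
      · exact ⟨hy1.mpr h1.1, hy2.mpr h1.2⟩
    · rw [if_neg, if_neg h1]
      · by_cases h2c : b ≤ n ∧ n < c
        · rw [if_pos ⟨hy3.mpr h2c.1, hy4.mpr h2c.2⟩, if_pos h2c]; ring
        · rw [if_neg, if_neg h2c]; · ring
          intro h
          exact h2c ⟨hy3.mp h.1, hy4.mp h.2⟩
      · intro h
        exact h1 ⟨hy1.mp h.1, hy2.mp h.2⟩
  rw [Finset.sum_congr rfl key, Finset.sum_sub_distrib]
  rw [Finset.sum_boole, Finset.sum_boole]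
  have hfil1 : (Finset.range T).filter (fun n => a ≤ n ∧ n < b) = Finset.Ico a b := by
    ext n
    simp only [Finset.mem_filter, Finset.mem_range, Finset.mem_Ico]
    constructor
    · rintro ⟨_, h⟩; exact h
    · rintro ⟨h1, h2⟩; exact ⟨lt_of_lt_of_le h2 hbT, h1, h2⟩
  have hfil2 : (Finset.range T).filter (fun n => b ≤ n ∧ n < c) = Finset.Ico b c := by
    ext n
    simp only [Finset.mem_filter, Finset.mem_range, Finset.mem_Ico]
    constructor
    · rintro ⟨_, h⟩; exact h
    · rintro ⟨h1, h2⟩; exact ⟨lt_of_lt_of_le h2 hcT, h1, h2⟩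
  rw [hfil1, hfil2]
  simp only [Finset.sum_const, Nat.card_Ico, nsmul_eq_mul, mul_one]
  -- now bound |(b-a : ℕ) - (c-b : ℕ)|
  rw [Nat.cast_sub hab, Nat.cast_sub hbc]
  have hla : α ≤ a := Nat.le_ceil _
  have hlb : β ≤ b := Nat.le_ceil _
  have hlc : γ ≤ c := Nat.le_ceil _
  have hua : (a:ℝ) < α + 1 := Nat.ceil_lt_add_one hα0
  have hub : (b:ℝ) < β + 1 := Nat.ceil_lt_add_one hβ0
  have huc : (c:ℝ) < γ + 1 := Nat.ceil_lt_add_one hγ0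
  set d : ℤ := 2 * (b:ℤ) - (a:ℤ) - (c:ℤ) with hd
  have hd2 : d < 2 := by
    have : ((d:ℤ):ℝ) < 2 := by rw [hd]; push_cast; linarith
    exact_mod_cast this
  have hd2' : (-2 : ℤ) < d := by
    have : (-2 : ℝ) < ((d:ℤ):ℝ) := by rw [hd]; push_cast; linarith
    exact_mod_cast this
  have habs : |(d:ℝ)| ≤ 1 := by
    rw [abs_le]
    constructor
    · have : (-1 : ℤ) ≤ d := by omega
      exact_mod_cast this
    · have : d ≤ 1 := by omega
      exact_mod_cast this
  calc |(b:ℝ) - a - ((c:ℝ) - b)| = |(d:ℝ)| := by rw [hd]; congr 1; push_cast; ring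
    _ ≤ 1 := habs

/-- partial sums of the discretized composite Haar functions
`Ψ_k(t) = ψ_k((t-1)/T)` grow at most geometrically in the index: there is a
finite constant `C > 0` such that for every `T ≥ 1` and every `k ≥ 1`,
`|∑_{t=1}^{T} Ψ_k(t)| ≤ C · 2^k`.  Hence the discrete-basis summand bound of
Assumption 1.d holds for the composite Haar basis with `η(k) = 2^k`. -/
theorem haarComposite_partial_sum_bound :
    ∃ C : ℝ, 0 < C ∧ ∀ T k : ℕ, 1 ≤ T → 1 ≤ k →
      |∑ t ∈ Finset.Icc 1 T, haarComposite k (((t : ℝ) - 1) / T)| ≤ C * 2 ^ k := by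
  refine ⟨1, one_pos, fun T k hT hk => ?_⟩
  obtain ⟨j, rfl⟩ : ∃ j, k = j + 1 := ⟨k - 1, by omega⟩
  have hre : ∑ t ∈ Finset.Icc 1 T, haarComposite (j+1) (((t : ℝ) - 1) / T)
      = ∑ n ∈ Finset.range T, ∑ m ∈ Finset.range (2 ^ j),
          haarMother (2 ^ j * (n : ℝ) / T - m) := by
    rw [← Finset.Ico_add_one_right_eq_Icc, Finset.sum_Ico_eq_sum_range]
    simp only [Nat.add_sub_cancel, Nat.succ_sub_one]
    refine Finset.sum_congr rfl fun n _ => ?_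
    show haarComposite (j+1) _ = _
    rw [haarComposite]
    refine Finset.sum_congr rfl fun m _ => ?_
    congr 1
    push_cast
    ring
  rw [hre, Finset.sum_comm]
  calc |∑ m ∈ Finset.range (2 ^ j), ∑ n ∈ Finset.range T, haarMother (2 ^ j * (n : ℝ) / T - m)|
      ≤ ∑ m ∈ Finset.range (2 ^ j), |∑ n ∈ Finset.range T, haarMother (2 ^ j * (n : ℝ) / T - m)| :=
        Finset.abs_sum_le_sum_abs _ _
    _ ≤ ∑ m ∈ Finset.range (2 ^ j), 1 := by
        refine Finset.sum_le_sum fun m hm => ?_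
        exact haar_inner_bound T j m hT (Finset.mem_range.mp hm)
    _ = (2 : ℝ) ^ j := by simp
    _ ≤ 1 * 2 ^ (j + 1) := by rw [one_mul, pow_succ]; nlinarith [pow_pos (by norm_num : (0:ℝ) < 2) j]
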